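/- Let T > 0, let f : [0,T] → ℝ be continuous, let K ≥ 0 and v ∈ ℝ. Then there exists a continuous function V : [0,T] → ℝ such that for every t ∈ [0,T], V(t) = v + K · max( sup_{s ∈ [0,t]} ( −( f(s) + ∫_0^s V(u) du ) ), 0 ). -/

import Mathlib

open MeasureTheory Set

namespace WhiteAux

noncomputable def runSup (g : ℝ → ℝ) (t : ℝ) : ℝ := sSup (g '' Icc 0 t)

lemma runSup_mono {g : ℝ → ℝ} (hg : Continuous g) {a b : ℝ} (ha : 0 ≤ a) (hab : a ≤ b) :
    runSup g a ≤ runSup g b :=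
  csSup_le_csSup (isCompact_Icc.image hg).bddAbove
    ⟨g 0, mem_image_of_mem _ (left_mem_Icc.2 ha)⟩
    (image_mono (Icc_subset_Icc le_rfl hab))

lemma runSup_le_add {g : ℝ → ℝ} (hg : Continuous g) {a b ε : ℝ} (ha : 0 ≤ a) (hab : a ≤ b)
    (hε : ∀ s ∈ Icc a b, g s ≤ g a + ε) : runSup g b ≤ runSup g a + ε := by
  have hbdd : BddAbove (g '' Icc 0 a) := (isCompact_Icc.image hg).bddAbove
  have hε0 : 0 ≤ ε := by have := hε a (left_mem_Icc.2 hab); linarith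
  have hga : g a ≤ sSup (g '' Icc 0 a) := le_csSup hbdd ⟨a, right_mem_Icc.2 ha, rfl⟩
  have hsplit : Icc (0:ℝ) b = Icc 0 a ∪ Icc a b := (Icc_union_Icc_eq_Icc ha hab).symm
  rw [runSup, hsplit, image_union,
    csSup_union hbdd ⟨g 0, mem_image_of_mem _ (left_mem_Icc.2 ha)⟩
      (isCompact_Icc.image hg).bddAbove ⟨g a, mem_image_of_mem _ (left_mem_Icc.2 hab)⟩]
  apply max_le (le_add_of_nonneg_right hε0)
  refine csSup_le ⟨g a, mem_image_of_mem _ (left_mem_Icc.2 hab)⟩ ?_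
  rintro x ⟨s, hs, rfl⟩
  exact (hε s hs).trans (by linarith)

lemma runSup_continuousOn {g : ℝ → ℝ} (hg : Continuous g) {T : ℝ} :
    ContinuousOn (runSup g) (Icc 0 T) := by
  rcases le_or_gt 0 T with hT | hT
  swap
  · rw [Icc_eq_empty (by linarith)]; exact continuousOn_empty _
  rw [Metric.continuousOn_iff]
  intro t₀ ht₀ ε hε
  have hu := isCompact_Icc.uniformContinuousOn_of_continuous
    (hg.continuousOn : ContinuousOn g (Icc (0:ℝ) T))
  rw [Metric.uniformContinuousOn_iff] at hu
  obtain ⟨δ, hδ, hδ'⟩ := hu (ε/2) (by linarith)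
  refine ⟨δ, hδ, fun t ht hdist => ?_⟩
  have key : ∀ a b : ℝ, a ∈ Icc 0 T → b ∈ Icc 0 T → a ≤ b → dist a b < δ →
      |runSup g b - runSup g a| < ε := by
    intro a b haT hbT hab hd
    have h1 : runSup g a ≤ runSup g b := runSup_mono hg haT.1 hab
    have h2 : runSup g b ≤ runSup g a + ε/2 := by
      apply runSup_le_add hg haT.1 hab
      intro s hs
      have hsT : s ∈ Icc (0:ℝ) T := ⟨haT.1.trans hs.1, hs.2.trans hbT.2⟩
      have hsa : dist s a < δ := by
        rw [Real.dist_eq] at hd ⊢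
        rw [abs_of_nonneg (by linarith [hs.1] : (0:ℝ) ≤ s - a)]
        rw [abs_of_nonpos (by linarith : a - b ≤ 0)] at hd
        linarith [hs.2]
      have := hδ' s hsT a haT hsa
      rw [Real.dist_eq, abs_lt] at this
      linarith [this.1]
    rw [abs_of_nonneg (by linarith)]
    linarith
  rcases le_total t t₀ with h | h
  · rw [Real.dist_eq, abs_sub_comm, ← Real.dist_eq]
    exact key t t₀ ht ht₀ h hdist
  · exact key t₀ t ht₀ ht h (by rw [dist_comm]; exact hdist)

lemma runSup_sub_le {g h : ℝ → ℝ} (hh : Continuous h) {t C : ℝ}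
    (ht : 0 ≤ t) (hC : ∀ s ∈ Icc (0:ℝ) t, g s - h s ≤ C) :
    runSup g t ≤ runSup h t + C := by
  refine csSup_le ⟨g 0, mem_image_of_mem _ (left_mem_Icc.2 ht)⟩ ?_
  rintro x ⟨s, hs, rfl⟩
  have h1 : h s ≤ runSup h t := le_csSup (isCompact_Icc.image hh).bddAbove
    (mem_image_of_mem _ hs)
  have := hC s hs; linarith

lemma abs_runSup_sub_le {g h : ℝ → ℝ} (hg : Continuous g) (hh : Continuous h) {t C : ℝ}
    (ht : 0 ≤ t) (hC : ∀ s ∈ Icc (0:ℝ) t, |g s - h s| ≤ C) :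
    |runSup g t - runSup h t| ≤ C := by
  rw [abs_le]
  constructor
  · have h2 : runSup h t ≤ runSup g t + C := by
      refine runSup_sub_le hg ht ?_
      intro s hs
      have := hC s hs
      rw [abs_le] at this
      linarith [this.1]
    linarith
  · have h2 : runSup g t ≤ runSup h t + C := by
      refine runSup_sub_le hh ht ?_
      intro s hs
      have := hC s hs
      rw [abs_le] at this
      linarith [this.2]
    linarith

variable {T : ℝ} (hT : 0 ≤ T) (fe : ℝ → ℝ) (K v : ℝ)

noncomputable def ext (V : C(Icc (0:ℝ) T, ℝ)) : ℝ → ℝ := IccExtend hT V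

lemma cont_ext (V : C(Icc (0:ℝ) T, ℝ)) : Continuous (ext hT V) :=
  V.continuous.Icc_extend'

lemma ext_of_mem (V : C(Icc (0:ℝ) T, ℝ)) {u : ℝ} (hu : u ∈ Icc (0:ℝ) T) :
    ext hT V u = V ⟨u, hu⟩ :=
  IccExtend_of_mem hT V hu

noncomputable def prim (V : C(Icc (0:ℝ) T, ℝ)) (s : ℝ) : ℝ :=
  ∫ u in (0:ℝ)..s, ext hT V u

lemma cont_prim (V : C(Icc (0:ℝ) T, ℝ)) : Continuous (prim hT V) :=
  intervalIntegral.continuous_primitive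
    (fun a b => ((cont_ext hT V).intervalIntegrable a b)) 0

noncomputable def gfun (V : C(Icc (0:ℝ) T, ℝ)) : ℝ → ℝ :=
  fun s => -(fe s + prim hT V s)

lemma cont_gfun (hfe : Continuous fe) (V : C(Icc (0:ℝ) T, ℝ)) :
    Continuous (gfun hT fe V) :=
  ((hfe.add (cont_prim hT V))).neg

noncomputable def Phi (hfe : Continuous fe) (V : C(Icc (0:ℝ) T, ℝ)) : C(Icc (0:ℝ) T, ℝ) :=
  ContinuousMap.mk ((Icc (0:ℝ) T).restrict fun t => v + K * max (runSup (gfun hT fe V) t) 0)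
    (by
      refine ContinuousOn.restrict ?_
      exact continuousOn_const.add (continuousOn_const.mul
        ((runSup_continuousOn (cont_gfun hT fe hfe V)).sup continuousOn_const)))

lemma Phi_apply (hfe : Continuous fe) (V : C(Icc (0:ℝ) T, ℝ)) (x : Icc (0:ℝ) T) :
    Phi hT fe K v hfe V x = v + K * max (runSup (gfun hT fe V) x) 0 := rfl

lemma step (hK : 0 ≤ K) (hfe : Continuous fe) (V W : C(Icc (0:ℝ) T, ℝ))
    {t : ℝ} (ht : t ∈ Icc (0:ℝ) T) :
    |Phi hT fe K v hfe V ⟨t, ht⟩ - Phi hT fe K v hfe W ⟨t, ht⟩| ≤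
      K * ∫ u in (0:ℝ)..t, |ext hT V u - ext hT W u| := by
  have hint : IntervalIntegrable (fun u => |ext hT V u - ext hT W u|) volume 0 t :=
    (((cont_ext hT V).sub (cont_ext hT W)).abs).intervalIntegrable 0 t
  have hC : ∀ s ∈ Icc (0:ℝ) t,
      |gfun hT fe V s - gfun hT fe W s| ≤ ∫ u in (0:ℝ)..t, |ext hT V u - ext hT W u| := by
    intro s hs
    have h1 : gfun hT fe V s - gfun hT fe W s =
        ∫ u in (0:ℝ)..s, (ext hT W u - ext hT V u) := by
      rw [intervalIntegral.integral_sub ((cont_ext hT W).intervalIntegrable 0 s)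
        ((cont_ext hT V).intervalIntegrable 0 s)]
      simp only [gfun, prim]
      ring
    rw [h1]
    calc |∫ u in (0:ℝ)..s, (ext hT W u - ext hT V u)|
        ≤ ∫ u in (0:ℝ)..s, |ext hT W u - ext hT V u| :=
          intervalIntegral.abs_integral_le_integral_abs hs.1
      _ = ∫ u in (0:ℝ)..s, |ext hT V u - ext hT W u| := by
          congr 1; ext u; rw [abs_sub_comm]
      _ ≤ ∫ u in (0:ℝ)..t, |ext hT V u - ext hT W u| := by
          refine intervalIntegral.integral_mono_interval le_rfl hs.1 hs.2 ?_ hint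
          filter_upwards with u using abs_nonneg _
  have habs : |max (runSup (gfun hT fe V) t) 0 - max (runSup (gfun hT fe W) t) 0| ≤
      ∫ u in (0:ℝ)..t, |ext hT V u - ext hT W u| :=
    (abs_max_sub_max_le_abs _ _ _).trans
      (abs_runSup_sub_le (cont_gfun hT fe hfe V) (cont_gfun hT fe hfe W) ht.1 hC)
  have heq : Phi hT fe K v hfe V ⟨t, ht⟩ - Phi hT fe K v hfe W ⟨t, ht⟩ =
      K * (max (runSup (gfun hT fe V) t) 0 - max (runSup (gfun hT fe W) t) 0) := by
    rw [Phi_apply, Phi_apply]; ring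
  rw [heq, abs_mul, abs_of_nonneg hK]
  exact mul_le_mul_of_nonneg_left habs hK

lemma iter_bound (hK : 0 ≤ K) (hfe : Continuous fe) (n : ℕ) :
    ∀ (V W : C(Icc (0:ℝ) T, ℝ)) {t : ℝ} (ht : t ∈ Icc (0:ℝ) T),
      |(Phi hT fe K v hfe)^[n] V ⟨t, ht⟩ - (Phi hT fe K v hfe)^[n] W ⟨t, ht⟩| ≤
        K ^ n * t ^ n / (n.factorial : ℝ) * dist V W := by
  induction n with
  | zero =>
    intro V W t ht
    simp only [Function.iterate_zero, id_eq, pow_zero, Nat.factorial_zero, Nat.cast_one,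
      one_mul, mul_one, div_one]
    rw [← Real.dist_eq]
    exact ContinuousMap.dist_apply_le_dist (f := V) (g := W) ⟨t, ht⟩
  | succ n ih =>
    intro V W t ht
    simp only [Function.iterate_succ_apply']
    refine (step hT fe K v hK hfe _ _ ht).trans ?_
    set A := (Phi hT fe K v hfe)^[n] V with hA
    set B := (Phi hT fe K v hfe)^[n] W with hB
    have hint1 : IntervalIntegrable (fun u => |ext hT A u - ext hT B u|) volume 0 t :=
      (((cont_ext hT A).sub (cont_ext hT B)).abs).intervalIntegrable 0 t
    have hint2 : IntervalIntegrable
        (fun u => K ^ n * u ^ n / (n.factorial : ℝ) * dist V W) volume 0 t := by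
      apply Continuous.intervalIntegrable
      continuity
    have hmono : (∫ u in (0:ℝ)..t, |ext hT A u - ext hT B u|) ≤
        ∫ u in (0:ℝ)..t, K ^ n * u ^ n / (n.factorial : ℝ) * dist V W := by
      refine intervalIntegral.integral_mono_on ht.1 hint1 hint2 ?_
      intro u hu
      have huT : u ∈ Icc (0:ℝ) T := ⟨hu.1, hu.2.trans ht.2⟩
      rw [ext_of_mem hT A huT, ext_of_mem hT B huT]
      exact ih V W huT
    have hval : (∫ u in (0:ℝ)..t, K ^ n * u ^ n / (n.factorial : ℝ) * dist V W) =
        K ^ n / (n.factorial : ℝ) * dist V W * (t ^ (n + 1) / (n + 1)) := by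
      have : (fun u => K ^ n * u ^ n / (n.factorial : ℝ) * dist V W) =
          fun u => (K ^ n / (n.factorial : ℝ) * dist V W) * u ^ n := by
        ext u; ring
      rw [this, intervalIntegral.integral_const_mul, integral_pow]
      rw [zero_pow (Nat.succ_ne_zero n)]
      ring
    refine (mul_le_mul_of_nonneg_left hmono hK).trans ?_
    rw [hval]
    have hfac : ((n + 1).factorial : ℝ) = (n + 1) * (n.factorial : ℝ) := by
      rw [Nat.factorial_succ]; push_cast; ring
    rw [hfac]
    have hnfac : (0:ℝ) < (n.factorial : ℝ) := by positivity
    have hn1 : (0:ℝ) < (n:ℝ) + 1 := by positivity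
    refine le_of_eq ?_
    field_simp
    ring

end WhiteAux

/-- Existence part of White's deterministic Skorohod-map theorem. -/
theorem white_skorohod_map_existence
    (T : ℝ) (hT : 0 < T) (f : ℝ → ℝ) (hf : ContinuousOn f (Icc 0 T))
    (K : ℝ) (hK : 0 ≤ K) (v : ℝ) :
    ∃ V : ℝ → ℝ, ContinuousOn V (Icc 0 T) ∧
      ∀ t ∈ Icc (0 : ℝ) T,
        V t = v + K * max (sSup ((fun s => -(f s + ∫ u in (0:ℝ)..s, V u)) '' Icc 0 t)) 0 := by
  classical
  have hT' : (0:ℝ) ≤ T := hT.le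
  set fe : ℝ → ℝ := IccExtend hT' ((Icc (0:ℝ) T).restrict f) with hfe_def
  have hfe : Continuous fe := (hf.restrict).Icc_extend'
  have hfe_eq : ∀ s ∈ Icc (0:ℝ) T, fe s = f s := fun s hs => IccExtend_of_mem hT' _ hs
  set Φ : C(Icc (0:ℝ) T, ℝ) → C(Icc (0:ℝ) T, ℝ) := WhiteAux.Phi hT' fe K v hfe with hΦ
  -- pick n with (K*T)^n / n! < 1
  obtain ⟨n, hn⟩ : ∃ n : ℕ, (K * T) ^ n / (n.factorial : ℝ) < 1 := by
    have h0 := FloorSemiring.tendsto_pow_div_factorial_atTop (K * T)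
    exact (h0.eventually (gt_mem_nhds one_pos)).exists
  set c : NNReal := ⟨(K * T) ^ n / (n.factorial : ℝ), by positivity⟩ with hc
  have hc1 : c < 1 := by
    rw [← NNReal.coe_lt_coe]; exact hn
  have hlip : LipschitzWith c (Φ^[n]) := by
    refine LipschitzWith.of_dist_le_mul fun V W => ?_
    rw [ContinuousMap.dist_le (by positivity)]
    rintro ⟨t, ht⟩
    rw [Real.dist_eq]
    refine (WhiteAux.iter_bound hT' fe K v hK hfe n V W ht).trans ?_
    have h1 : K ^ n * t ^ n ≤ (K * T) ^ n := by
      rw [mul_pow]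
      exact mul_le_mul_of_nonneg_left (pow_le_pow_left₀ ht.1 ht.2 n) (by positivity)
    have h2 : K ^ n * t ^ n / (n.factorial : ℝ) ≤ (K * T) ^ n / (n.factorial : ℝ) := by
      gcongr
    calc K ^ n * t ^ n / (n.factorial : ℝ) * dist V W
        ≤ (K * T) ^ n / (n.factorial : ℝ) * dist V W :=
          mul_le_mul_of_nonneg_right h2 dist_nonneg
      _ = (c : ℝ) * dist V W := rfl
  haveI : Nonempty C(Icc (0:ℝ) T, ℝ) := ⟨ContinuousMap.const _ 0⟩
  have hcontr : ContractingWith c (Φ^[n]) := ⟨hc1, hlip⟩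
  set x : C(Icc (0:ℝ) T, ℝ) := hcontr.fixedPoint (Φ^[n]) with hx_def
  have hx : Function.IsFixedPt (Φ^[n]) x := hcontr.fixedPoint_isFixedPt
  have hfix : Φ x = x := by
    have h1 : Function.IsFixedPt (Φ^[n]) (Φ x) := by
      show Φ^[n] (Φ x) = Φ x
      rw [← Function.iterate_succ_apply, Function.iterate_succ_apply', hx]
    exact (hcontr.fixedPoint_unique h1).trans (hcontr.fixedPoint_unique hx).symm
  refine ⟨WhiteAux.ext hT' x, (WhiteAux.cont_ext hT' x).continuousOn, fun t ht => ?_⟩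
  have h1 : WhiteAux.ext hT' x t = x ⟨t, ht⟩ := WhiteAux.ext_of_mem hT' x ht
  conv_lhs => rw [h1, ← hfix]
  rw [hΦ, WhiteAux.Phi_apply]
  have h2 : ((fun s => -(f s + ∫ u in (0:ℝ)..s, WhiteAux.ext hT' x u)) '' Icc 0 t) =
      (WhiteAux.gfun hT' fe x) '' Icc 0 t := by
    refine image_congr fun s hs => ?_
    have hsT : s ∈ Icc (0:ℝ) T := ⟨hs.1, hs.2.trans ht.2⟩
    simp only [WhiteAux.gfun, WhiteAux.prim, hfe_eq s hsT]
  rw [h2]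
  rfl
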